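/- Let V, W be complex vector spaces, e₁, e₂ ∈ V linearly independent, and f₁, f₂ ∈ W linearly independent. In the 3-dimensional subspace S = span{ e₁ ⊗ f₁, e₂ ⊗ f₁, e₂ ⊗ f₂ } of V ⊗ W, an element is a simple tensor if and only if it lies in span{e₁, e₂} ⊗ f₁ := { x ⊗ f₁ : x ∈ span{e₁, e₂} } or in e₂ ⊗ span{f₁, f₂} := { e₂ ⊗ y : y ∈ span{f₁, f₂} }. -/

import Mathlib

open TensorProduct

lemma dual_pair_exists {V : Type*} [AddCommGroup V] [Module ℂ V] (u v : V)
    (h : LinearIndependent ℂ ![u, v]) :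
    ∃ φ1 φ2 : V →ₗ[ℂ] ℂ, φ1 u = 1 ∧ φ1 v = 0 ∧ φ2 u = 0 ∧ φ2 v = 1 := by
  set p := Submodule.span ℂ (Set.range ![u, v]) with hp
  obtain ⟨q, hq⟩ := Submodule.exists_isCompl p
  set π := Submodule.projectionOnto p q hq with hπdef
  set b := Module.Basis.span h with hbdef
  have hmem : ∀ i : Fin 2, ![u, v] i ∈ p := fun i => Submodule.subset_span ⟨i, rfl⟩
  have hπ : ∀ i : Fin 2, π (![u, v] i) = b i := by
    intro i
    have h1 : π (![u, v] i) = ⟨![u, v] i, hmem i⟩ := by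
      have := Submodule.projectionOnto_apply_left hq ⟨![u, v] i, hmem i⟩
      simpa using this
    rw [h1]
    exact Subtype.ext (by rw [Module.Basis.span_apply])
  have key : ∀ i j : Fin 2, ((b.coord i).comp π) (![u, v] j)
      = if j = i then 1 else 0 := by
    intro i j
    rw [LinearMap.comp_apply, hπ, Module.Basis.coord_apply, Module.Basis.repr_self,
      Finsupp.single_apply]
  refine ⟨(b.coord 0).comp π, (b.coord 1).comp π, ?_, ?_, ?_, ?_⟩
  · simpa using key 0 0
  · simpa using key 0 1
  · simpa using key 1 0
  · simpa using key 1 1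

theorem stmt_11 {V W : Type*} [AddCommGroup V] [Module ℂ V]
    [AddCommGroup W] [Module ℂ W]
    (e1 e2 : V) (f1 f2 : W)
    (he : LinearIndependent ℂ ![e1, e2])
    (hf : LinearIndependent ℂ ![f1, f2])
    (t : V ⊗[ℂ] W)
    (ht : t ∈ Submodule.span ℂ {e1 ⊗ₜ[ℂ] f1, e2 ⊗ₜ[ℂ] f1, e2 ⊗ₜ[ℂ] f2}) :
    (∃ (x : V) (y : W), t = x ⊗ₜ[ℂ] y) ↔
      ((∃ x ∈ Submodule.span ℂ {e1, e2}, t = x ⊗ₜ[ℂ] f1) ∨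
       (∃ y ∈ Submodule.span ℂ {f1, f2}, t = e2 ⊗ₜ[ℂ] y)) := by
  constructor
  · rintro ⟨x, y, rfl⟩
    -- extract coefficients
    rw [show ({e1 ⊗ₜ[ℂ] f1, e2 ⊗ₜ[ℂ] f1, e2 ⊗ₜ[ℂ] f2} : Set (V ⊗[ℂ] W))
        = insert (e1 ⊗ₜ[ℂ] f1) {e2 ⊗ₜ[ℂ] f1, e2 ⊗ₜ[ℂ] f2} from rfl,
      Submodule.mem_span_insert] at ht
    obtain ⟨a, z, hz, hxy⟩ := ht
    rw [Submodule.mem_span_pair] at hz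
    obtain ⟨b, c, rfl⟩ := hz
    obtain ⟨φ1, φ2, hφ11, hφ12, hφ21, hφ22⟩ := dual_pair_exists e1 e2 he
    obtain ⟨ψ1, ψ2, hψ11, hψ12, hψ21, hψ22⟩ := dual_pair_exists f1 f2 hf
    set g : (V →ₗ[ℂ] ℂ) → (W →ₗ[ℂ] ℂ) → (V ⊗[ℂ] W →ₗ[ℂ] ℂ) := fun φ ψ =>
      (TensorProduct.lid ℂ ℂ).toLinearMap ∘ₗ TensorProduct.map φ ψ with hg
    have hgt : ∀ (φ : V →ₗ[ℂ] ℂ) (ψ : W →ₗ[ℂ] ℂ) (v : V) (w : W),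
        g φ ψ (v ⊗ₜ[ℂ] w) = φ v * ψ w := by
      intro φ ψ v w
      simp [hg, TensorProduct.lid_tmul, smul_eq_mul]
    have hga : ∀ (φ : V →ₗ[ℂ] ℂ) (ψ : W →ₗ[ℂ] ℂ),
        g φ ψ (x ⊗ₜ[ℂ] y)
          = a * (φ e1 * ψ f1) + b * (φ e2 * ψ f1) + c * (φ e2 * ψ f2) := by
      intro φ ψ
      rw [hxy]
      simp [hgt, map_add, map_smul, smul_eq_mul, add_assoc]
    have h11 : φ1 x * ψ1 y = a := by
      have := hga φ1 ψ1; rw [hgt] at this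
      simpa [hφ11, hφ12, hψ11, hψ12] using this
    have h12 : φ1 x * ψ2 y = 0 := by
      have := hga φ1 ψ2; rw [hgt] at this
      simpa [hφ11, hφ12, hψ21, hψ22] using this
    have h21 : φ2 x * ψ1 y = b := by
      have := hga φ2 ψ1; rw [hgt] at this
      simpa [hφ21, hφ22, hψ11, hψ12] using this
    have h22 : φ2 x * ψ2 y = c := by
      have := hga φ2 ψ2; rw [hgt] at this
      simpa [hφ21, hφ22, hψ21, hψ22] using this
    have hac : a * c = 0 := by
      rw [← h11, ← h22]
      have : (φ1 x * ψ2 y) * (φ2 x * ψ1 y) = 0 := by rw [h12]; ring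
      calc φ1 x * ψ1 y * (φ2 x * ψ2 y)
          = (φ1 x * ψ2 y) * (φ2 x * ψ1 y) := by ring
        _ = 0 := this
    rcases mul_eq_zero.mp hac with ha | hc
    · right
      refine ⟨b • f1 + c • f2, Submodule.mem_span_pair.mpr ⟨b, c, rfl⟩, ?_⟩
      rw [hxy, ha]
      simp [TensorProduct.tmul_add, TensorProduct.tmul_smul,
        TensorProduct.smul_tmul']
    · left
      refine ⟨a • e1 + b • e2, Submodule.mem_span_pair.mpr ⟨a, b, rfl⟩, ?_⟩
      rw [hxy, hc]
      simp [TensorProduct.add_tmul, TensorProduct.smul_tmul']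
  · rintro (⟨x, _, rfl⟩ | ⟨y, _, rfl⟩)
    · exact ⟨x, f1, rfl⟩
    · exact ⟨e2, y, rfl⟩
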